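/- Let p, q be positive integers, V ∈ ℝ^{p×n}, T ∈ ℝ^{p×q}, and set X = Vᵀ(I_p + TTᵀ)⁻¹V. Define V₊ = [C ; (V ⊗ I_r)A] ∈ ℝ^{(l+rp)×n} (C stacked above (V ⊗ I_r)A) and T₊ = [[0_{l×m}, 0_{l×rq}],[(V ⊗ I_r)B, T ⊗ I_r]] ∈ ℝ^{(l+rp)×(m+rq)}. Then I_{rn} + BBᵀ(X ⊗ I_r) is invertible and D(X) = V₊ᵀ(I_{l+rp} + T₊T₊ᵀ)⁻¹V₊ (the inductive step establishing the ⋉-block-Toeplitz closed form of the fixed point iterates). -/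

import Mathlib

open Matrix
open scoped Kronecker

/-- The SDARE Riccati operator `D(X) = Aᵀ (X ⊗ I_r) (I + B Bᵀ (X ⊗ I_r))⁻¹ A + Cᵀ C`,
with `rn` realized as the index type `Fin n × Fin r`. -/
noncomputable def Dop {n m l r : ℕ}
    (A : Matrix (Fin n × Fin r) (Fin n) ℝ)
    (B : Matrix (Fin n × Fin r) (Fin m) ℝ)
    (C : Matrix (Fin l) (Fin n) ℝ)
    (X : Matrix (Fin n) (Fin n) ℝ) : Matrix (Fin n) (Fin n) ℝ :=
  Aᵀ * (X ⊗ₖ (1 : Matrix (Fin r) (Fin r) ℝ)) *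
      (1 + B * Bᵀ * (X ⊗ₖ (1 : Matrix (Fin r) (Fin r) ℝ)))⁻¹ * A + Cᵀ * C

section Aux

/-- transpose commutes with `· ⊗ₖ 1`. -/
lemma kron_one_transpose {a b c : ℕ} (M : Matrix (Fin a) (Fin b) ℝ) :
    (M ⊗ₖ (1 : Matrix (Fin c) (Fin c) ℝ))ᵀ = Mᵀ ⊗ₖ (1 : Matrix (Fin c) (Fin c) ℝ) := by
  rw [← Matrix.kroneckerMap_transpose, Matrix.transpose_one]

/-- `· ⊗ₖ 1` is multiplicative. -/
lemma kron_one_mul {a b d c : ℕ} (M : Matrix (Fin a) (Fin b) ℝ)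
    (N : Matrix (Fin b) (Fin d) ℝ) :
    ((M * N) ⊗ₖ (1 : Matrix (Fin c) (Fin c) ℝ)) =
      (M ⊗ₖ (1 : Matrix (Fin c) (Fin c) ℝ)) * (N ⊗ₖ (1 : Matrix (Fin c) (Fin c) ℝ)) := by
  simpa using Matrix.mul_kronecker_mul M N (1 : Matrix (Fin c) (Fin c) ℝ) (1 : Matrix (Fin c) (Fin c) ℝ)

/-- `· ⊗ₖ 1` commutes with inverses. -/
lemma kron_one_inv {a c : ℕ} (M : Matrix (Fin a) (Fin a) ℝ) :
    (M ⊗ₖ (1 : Matrix (Fin c) (Fin c) ℝ))⁻¹ = M⁻¹ ⊗ₖ (1 : Matrix (Fin c) (Fin c) ℝ) := by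
  simpa using Matrix.inv_kronecker M (1 : Matrix (Fin c) (Fin c) ℝ)

end Aux

theorem stmt6 {n m l r p q : ℕ} (hn : 0 < n) (hm : 0 < m) (hl : 0 < l) (hr : 0 < r)
    (hp : 0 < p) (hq : 0 < q)
    (A : Matrix (Fin n × Fin r) (Fin n) ℝ)
    (B : Matrix (Fin n × Fin r) (Fin m) ℝ)
    (C : Matrix (Fin l) (Fin n) ℝ)
    (V : Matrix (Fin p) (Fin n) ℝ) (T : Matrix (Fin p) (Fin q) ℝ)
    (X : Matrix (Fin n) (Fin n) ℝ)
    (hX : X = Vᵀ * (1 + T * Tᵀ)⁻¹ * V)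
    (Vp : Matrix (Fin l ⊕ Fin p × Fin r) (Fin n) ℝ)
    (Tp : Matrix (Fin l ⊕ Fin p × Fin r) (Fin m ⊕ Fin q × Fin r) ℝ)
    (hVp : Vp = Matrix.fromRows C ((V ⊗ₖ (1 : Matrix (Fin r) (Fin r) ℝ)) * A))
    (hTp : Tp = Matrix.fromBlocks (0 : Matrix (Fin l) (Fin m) ℝ)
        (0 : Matrix (Fin l) (Fin q × Fin r) ℝ)
        ((V ⊗ₖ (1 : Matrix (Fin r) (Fin r) ℝ)) * B)
        (T ⊗ₖ (1 : Matrix (Fin r) (Fin r) ℝ))) :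
    IsUnit (1 + B * Bᵀ * (X ⊗ₖ (1 : Matrix (Fin r) (Fin r) ℝ))) ∧
    Dop A B C X = Vpᵀ * (1 + Tp * Tpᵀ)⁻¹ * Vp := by
  classical
  set W : Matrix (Fin p × Fin r) (Fin n × Fin r) ℝ := V ⊗ₖ 1 with hWdef
  set S : Matrix (Fin p × Fin r) (Fin q × Fin r) ℝ := T ⊗ₖ 1 with hSdef
  set N : Matrix (Fin p × Fin r) (Fin p × Fin r) ℝ := 1 + S * Sᵀ with hNdef
  set M : Matrix (Fin p × Fin r) (Fin p × Fin r) ℝ := 1 + (S * Sᵀ + W * B * (W * B)ᵀ)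
    with hMdef
  -- positivity facts
  have hSS : (S * Sᵀ).PosSemidef := by
    have := Matrix.posSemidef_self_mul_conjTranspose S
    rwa [Matrix.conjTranspose_eq_transpose_of_trivial] at this
  have hWB : ((W * B) * (W * B)ᵀ).PosSemidef := by
    have := Matrix.posSemidef_self_mul_conjTranspose (W * B)
    rwa [Matrix.conjTranspose_eq_transpose_of_trivial] at this
  have hN : N.PosDef := Matrix.PosDef.add_posSemidef Matrix.PosDef.one hSS
  have hM : M.PosDef := Matrix.PosDef.add_posSemidef Matrix.PosDef.one (hSS.add hWB)
  have hNdet : IsUnit N.det := (Matrix.isUnit_iff_isUnit_det _).mp hN.isUnit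
  have hMdet : IsUnit M.det := (Matrix.isUnit_iff_isUnit_det _).mp hM.isUnit
  have hNi : N⁻¹.PosDef := hN.inv
  -- M = N + (W B)(W B)ᵀ
  have hMN : M = N + W * B * (W * B)ᵀ := by rw [hMdef, hNdef, add_assoc]
  -- the Kronecker form of X ⊗ 1
  have hTTkron : ((1 + T * Tᵀ) ⊗ₖ (1 : Matrix (Fin r) (Fin r) ℝ)) = N := by
    rw [Matrix.add_kronecker, Matrix.one_kronecker_one, kron_one_mul, hNdef,
      ← kron_one_transpose, hSdef]
  have hKron : X ⊗ₖ (1 : Matrix (Fin r) (Fin r) ℝ) = Wᵀ * N⁻¹ * W := by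
    rw [hX, kron_one_mul, kron_one_mul, ← kron_one_inv, hTTkron, ← kron_one_transpose, ← hWdef]
  set Y : Matrix (Fin n × Fin r) (Fin n × Fin r) ℝ := Wᵀ * N⁻¹ * W with hYdef
  -- the inner 1 + BᵀYB is positive definite
  have hInner : (1 + Bᵀ * Y * B).PosDef := by
    have h1 : ((W * B)ᵀ * N⁻¹ * (W * B)).PosSemidef := by
      have := hNi.posSemidef.conjTranspose_mul_mul_same (W * B)
      rwa [Matrix.conjTranspose_eq_transpose_of_trivial] at this
    have h2 : Bᵀ * Y * B = (W * B)ᵀ * N⁻¹ * (W * B) := by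
      simp [hYdef, Matrix.transpose_mul, Matrix.mul_assoc]
    rw [h2]
    exact Matrix.PosDef.add_posSemidef Matrix.PosDef.one h1
  -- the first conjunct
  have hG : IsUnit (1 + B * Bᵀ * Y) := by
    rw [Matrix.isUnit_iff_isUnit_det, Matrix.mul_assoc B Bᵀ Y, Matrix.det_one_add_mul_comm]
    exact (Matrix.isUnit_iff_isUnit_det _).mp hInner.isUnit
  have hGdet : IsUnit (1 + B * Bᵀ * Y).det := (Matrix.isUnit_iff_isUnit_det _).mp hG
  refine ⟨by rw [hKron]; exact hG, ?_⟩
  -- the key push-through identity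
  have hWG : W * (1 + B * Bᵀ * Y) = M * (N⁻¹ * W) := by
    rw [hMN, Matrix.mul_add, Matrix.mul_one, Matrix.add_mul,
      ← Matrix.mul_assoc N, Matrix.mul_nonsing_inv _ hNdet, Matrix.one_mul]
    congr 1
    simp [hYdef, Matrix.transpose_mul, Matrix.mul_assoc]
  have h2 : Wᵀ * M⁻¹ * (W * (1 + B * Bᵀ * Y)) = Y := by
    rw [hWG, ← Matrix.mul_assoc, Matrix.mul_assoc Wᵀ M⁻¹ M,
      Matrix.nonsing_inv_mul _ hMdet, Matrix.mul_one, hYdef, Matrix.mul_assoc]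
  have hKey : Y * (1 + B * Bᵀ * Y)⁻¹ = Wᵀ * M⁻¹ * W := by
    nth_rewrite 1 [← h2]
    rw [← Matrix.mul_assoc, Matrix.mul_assoc (Wᵀ * M⁻¹ * W),
      Matrix.mul_nonsing_inv _ hGdet, Matrix.mul_one]
  -- block computation of 1 + Tp Tpᵀ
  have hTT : 1 + Tp * Tpᵀ = Matrix.fromBlocks 1 0 0 M := by
    rw [hTp, Matrix.fromBlocks_transpose, Matrix.fromBlocks_multiply,
      show (1 : Matrix (Fin l ⊕ Fin p × Fin r) (Fin l ⊕ Fin p × Fin r) ℝ) =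
          Matrix.fromBlocks 1 0 0 1 from Matrix.fromBlocks_one.symm,
      Matrix.fromBlocks_add]
    congr 1 <;> simp [hMdef, hWdef, hSdef, add_comm]
  have hBlockInv : (Matrix.fromBlocks (1 : Matrix (Fin l) (Fin l) ℝ) 0 0 M)⁻¹ =
      Matrix.fromBlocks 1 0 0 M⁻¹ := by
    apply Matrix.inv_eq_right_inv
    rw [Matrix.fromBlocks_multiply]
    simp [Matrix.mul_nonsing_inv _ hMdet, Matrix.fromBlocks_one]
  -- put everything together
  rw [hVp, hTT, hBlockInv, Matrix.transpose_fromRows, Matrix.fromCols_mul_fromBlocks,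
    Matrix.fromCols_mul_fromRows]
  show Dop A B C X = _
  rw [Dop, hKron, Matrix.mul_assoc Aᵀ Y, hKey]
  simp [Matrix.transpose_mul, Matrix.mul_assoc, add_comm]
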